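/- The number of rooted labeled trees on n+1 vertices with a specified root whose root has exactly k children equals C(n−1, k−1) · n^(n−k). -/

import Mathlib

/-- `p` is the parent function of a rooted tree on `Fin (n+1)` with root `0`:
the only fixed point of `p` is `0`, and every vertex eventually reaches it. -/
def IsRootedTree (n : ℕ) (p : Fin (n + 1) → Fin (n + 1)) : Prop :=
  (∀ v, p v = v ↔ v = 0) ∧ ∀ v, ∃ m, (p^[m]) v = 0

namespace RootedTreeCount

open Function Finset

variable {n : ℕ}

lemma zero_fix {p : Fin (n+1) → Fin (n+1)} (h : IsRootedTree n p) : p 0 = 0 :=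
  (h.1 0).2 rfl

open scoped Classical in
/-- depth: number of steps to reach `0`. -/
noncomputable def dth (p : Fin (n+1) → Fin (n+1)) (v : Fin (n+1)) : ℕ :=
  if h : ∃ m, (p^[m]) v = 0 then Nat.find h else 0

section dth

variable {p : Fin (n+1) → Fin (n+1)}

lemma dth_spec (h : IsRootedTree n p) (v : Fin (n+1)) : (p^[dth p v]) v = 0 := by
  rw [dth, dif_pos (h.2 v)]
  exact Nat.find_spec (h.2 v)

lemma dth_min (h : IsRootedTree n p) {v : Fin (n+1)} {j : ℕ} (hj : j < dth p v) :
    (p^[j]) v ≠ 0 := by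
  rw [dth, dif_pos (h.2 v)] at hj
  exact Nat.find_min (h.2 v) hj

lemma dth_eq {v : Fin (n+1)} {m : ℕ} (h1 : (p^[m]) v = 0)
    (h2 : ∀ j, j < m → (p^[j]) v ≠ 0) : dth p v = m := by
  have hex : ∃ m, (p^[m]) v = 0 := ⟨m, h1⟩
  rw [dth, dif_pos hex]
  exact (Nat.find_eq_iff hex).2 ⟨h1, fun j hj => h2 j hj⟩

lemma dth_pos (h : IsRootedTree n p) {v : Fin (n+1)} (hv : v ≠ 0) : 0 < dth p v := by
  rcases Nat.eq_zero_or_pos (dth p v) with h0 | h0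
  · have hs := dth_spec h v
    rw [h0] at hs
    simp only [Function.iterate_zero, id_eq] at hs
    exact absurd hs hv
  · exact h0

lemma dth_p (h : IsRootedTree n p) {v : Fin (n+1)} (hv : v ≠ 0) :
    dth p v = dth p (p v) + 1 := by
  apply dth_eq
  · rw [Function.iterate_succ_apply]
    exact dth_spec h (p v)
  · intro j hj
    cases j with
    | zero => simpa using hv
    | succ j =>
        rw [Function.iterate_succ_apply]
        exact dth_min h (by omega)

end dth

/-- the root (child of 0) above `v`. -/
noncomputable def rt (p : Fin (n+1) → Fin (n+1)) (v : Fin (n+1)) : Fin (n+1) :=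
  (p^[dth p v - 1]) v

section rt

variable {p : Fin (n+1) → Fin (n+1)} {v c : Fin (n+1)}

lemma rt_ne_zero (h : IsRootedTree n p) (hv : v ≠ 0) : rt p v ≠ 0 :=
  dth_min h (by have := dth_pos h hv; omega)

lemma rt_child (h : IsRootedTree n p) (hv : v ≠ 0) : p (rt p v) = 0 := by
  have hd := dth_pos h hv
  have hs := dth_spec h v
  rw [show dth p v = (dth p v - 1) + 1 from by omega, Function.iterate_succ_apply'] at hs
  rw [rt]
  exact hs

lemma rt_eq_iff (h : IsRootedTree n p) (hc0 : c ≠ 0) (hpc : p c = 0) (hv : v ≠ 0) :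
    rt p v = c ↔ ∃ m, (p^[m]) v = c := by
  constructor
  · intro hr; exact ⟨dth p v - 1, hr⟩
  · rintro ⟨m, hm⟩
    have hd : dth p v = m + 1 := by
      apply dth_eq
      · rw [Function.iterate_succ_apply', hm, hpc]
      · intro j hj h0
        have hmz : (p^[m]) v = 0 := by
          have hmj : m = (m - j) + j := by omega
          rw [hmj, Function.iterate_add_apply, h0, Function.iterate_fixed (zero_fix h)]
        exact hc0 (by rw [← hm, hmz])
    rw [rt, hd]
    simpa using hm

end rt

lemma iter_agree {α : Type*} (f g : α → α) (c : α) (hfg : ∀ x, x ≠ c → f x = g x) :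
    ∀ (i : ℕ) (u : α), (∀ j, j < i → (f^[j]) u ≠ c) → (f^[i]) u = (g^[i]) u := by
  intro i
  induction i with
  | zero => intro u _; rfl
  | succ i ih =>
      intro u hj
      have h1 : (f^[i]) u = (g^[i]) u := ih u (fun j hjj => hj j (by omega))
      have h2 : (f^[i]) u ≠ c := hj i (by omega)
      rw [Function.iterate_succ_apply', Function.iterate_succ_apply', hfg _ h2, h1]

lemma no_periodic {p : Fin (n+1) → Fin (n+1)} (h : IsRootedTree n p)
    {u : Fin (n+1)} (hu : u ≠ 0) {t : ℕ} (ht : (p^[t]) u = u) : t = 0 := by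
  by_contra h0
  obtain ⟨m, hm⟩ := h.2 u
  have hm0 : m ≠ 0 := by rintro rfl; exact hu hm
  have hcyc : (p^[t * m]) u = u := by
    rw [Function.iterate_mul]
    exact Function.iterate_fixed ht m
  have hle : m ≤ t * m := Nat.le_mul_of_pos_left m (Nat.pos_of_ne_zero h0)
  have : u = 0 := by
    calc u = (p^[t * m]) u := hcyc.symm
      _ = (p^[t * m - m]) ((p^[m]) u) := by
          rw [← Function.iterate_add_apply, Nat.sub_add_cancel hle]
      _ = (p^[t * m - m]) 0 := by rw [hm]
      _ = 0 := Function.iterate_fixed (zero_fix h) _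
  exact hu this

section updates

variable {p q : Fin (n+1) → Fin (n+1)} {c v u : Fin (n+1)}

lemma add_rooted (h : IsRootedTree n p) (hc0 : c ≠ 0) (hpc : p c = 0) (hv : v ≠ 0)
    (hav : ∀ m, (p^[m]) v ≠ c) : IsRootedTree n (Function.update p c v) := by
  set q := Function.update p c v with hqdef
  have hqc : q c = v := Function.update_self _ _ _
  have hne : ∀ w, w ≠ c → q w = p w := fun w hw => Function.update_of_ne hw _ _
  constructor
  · intro w
    constructor
    · intro hqw
      by_cases hwc : w = c
      · subst hwc
        rw [hqc] at hqw
        exact absurd hqw (hav 0)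
      · rw [hne w hwc] at hqw
        exact (h.1 w).1 hqw
    · rintro rfl
      rw [hne 0 (fun h0 => hc0 h0.symm)]
      exact (h.1 0).2 rfl
  · have agree : ∀ j, (q^[j]) v = (p^[j]) v := fun j =>
      (iter_agree p q c (fun x hx => (hne x hx).symm) j v (fun i _ => hav i)).symm
    suffices H : ∀ N w, dth p w = N → ∃ m, (q^[m]) w = 0 by
      intro w; exact H _ w rfl
    intro N
    induction N using Nat.strong_induction_on with
    | _ N ih =>
      intro w hw
      by_cases hw0 : w = 0
      · exact ⟨0, hw0⟩
      by_cases hwc : w = c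
      · subst hwc
        refine ⟨dth p v + 1, ?_⟩
        rw [Function.iterate_succ_apply, hqc, agree]
        exact dth_spec h v
      · have hstep : dth p w = dth p (p w) + 1 := dth_p h hw0
        obtain ⟨m, hm⟩ := ih (dth p (p w)) (by omega) (p w) rfl
        exact ⟨m + 1, by rw [Function.iterate_succ_apply, hne w hwc, hm]⟩

lemma remove_rooted (h : IsRootedTree n q) (hu : u ≠ 0) :
    IsRootedTree n (Function.update q u 0) := by
  set p := Function.update q u 0 with hpdef
  have hpu : p u = 0 := Function.update_self _ _ _
  have hne : ∀ w, w ≠ u → p w = q w := fun w hw => Function.update_of_ne hw _ _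
  constructor
  · intro w
    constructor
    · intro hpw
      by_cases hwu : w = u
      · subst hwu
        rw [hpu] at hpw
        exact hpw.symm
      · rw [hne w hwu] at hpw
        exact (h.1 w).1 hpw
    · rintro rfl
      rw [hne 0 (fun h0 => hu h0.symm)]
      exact (h.1 0).2 rfl
  · suffices H : ∀ N w, dth q w = N → ∃ m, (p^[m]) w = 0 by
      intro w; exact H _ w rfl
    intro N
    induction N using Nat.strong_induction_on with
    | _ N ih =>
      intro w hw
      by_cases hw0 : w = 0
      · exact ⟨0, hw0⟩
      by_cases hwu : w = u
      · subst hwu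
        exact ⟨1, by simpa using hpu⟩
      · have hstep : dth q w = dth q (q w) + 1 := dth_p h hw0
        obtain ⟨m, hm⟩ := ih (dth q (q w)) (by omega) (q w) rfl
        exact ⟨m + 1, by rw [Function.iterate_succ_apply, hne w hwu, hm]⟩

lemma remove_avoid (h : IsRootedTree n q) (hu : u ≠ 0) :
    ∀ m, ((Function.update q u 0)^[m]) (q u) ≠ u := by
  set p := Function.update q u 0 with hpdef
  by_contra hcon
  push_neg at hcon
  have hex : ∃ m, (p^[m]) (q u) = u := hcon
  have hspec := Nat.find_spec hex
  have hmin : ∀ j, j < Nat.find hex → (p^[j]) (q u) ≠ u := fun j hj => Nat.find_min hex hj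
  have hagree : (p^[Nat.find hex]) (q u) = (q^[Nat.find hex]) (q u) :=
    iter_agree p q u (fun x hx => Function.update_of_ne hx _ _) _ (q u) hmin
  have hper : (q^[Nat.find hex + 1]) u = u := by
    rw [Function.iterate_succ_apply, ← hagree, hspec]
  have := no_periodic h hu hper
  omega

end updates

/-- children of the root. -/
def Ch (p : Fin (n+1) → Fin (n+1)) : Finset (Fin (n+1)) :=
  univ.filter fun c => c ≠ 0 ∧ p c = 0

lemma mem_Ch {p : Fin (n+1) → Fin (n+1)} {c : Fin (n+1)} :
    c ∈ Ch p ↔ c ≠ 0 ∧ p c = 0 := by simp [Ch]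

lemma Ch_update_add {p : Fin (n+1) → Fin (n+1)} {c v : Fin (n+1)} (hv : v ≠ 0) :
    Ch (Function.update p c v) = (Ch p).erase c := by
  ext w
  rcases eq_or_ne w c with rfl | hwc
  · simp [mem_Ch, Function.update_self, hv]
  · simp [mem_Ch, Function.update_of_ne hwc, Finset.mem_erase, hwc]

lemma Ch_update_remove {q : Fin (n+1) → Fin (n+1)} {u : Fin (n+1)} (hu : u ≠ 0) :
    Ch (Function.update q u 0) = insert u (Ch q) := by
  ext w
  rcases eq_or_ne w u with rfl | hwu
  · simp [mem_Ch, Function.update_self, hu]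
  · simp [mem_Ch, Function.update_of_ne hwu, Finset.mem_insert, hwu]

lemma card_N (n : ℕ) : (univ.filter fun v : Fin (n+1) => v ≠ 0).card = n := by
  rw [Finset.filter_ne', Finset.card_erase_of_mem (Finset.mem_univ 0), Finset.card_univ,
    Fintype.card_fin]
  omega

open scoped Classical in
/-- the set of rooted trees with root degree `k`. -/
noncomputable def Pk (n k : ℕ) : Finset (Fin (n+1) → Fin (n+1)) :=
  univ.filter fun p => IsRootedTree n p ∧ (Ch p).card = k

lemma mem_Pk {k : ℕ} {p : Fin (n+1) → Fin (n+1)} :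
    p ∈ Pk n k ↔ IsRootedTree n p ∧ (Ch p).card = k := by
  classical
  simp [Pk]

lemma recurrence (n k : ℕ) :
    (Pk n (k+1)).card * (n * k) = (Pk n k).card * (n - k) := by
  classical
  set A : Finset ((Fin (n+1) → Fin (n+1)) × Fin (n+1) × Fin (n+1)) :=
    univ.filter fun x =>
      (IsRootedTree n x.1 ∧ (Ch x.1).card = k + 1) ∧ x.2.1 ≠ 0 ∧ x.1 x.2.1 = 0 ∧
        x.2.2 ≠ 0 ∧ ∀ m, (x.1^[m]) x.2.2 ≠ x.2.1 with hAdef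
  set B : Finset ((Fin (n+1) → Fin (n+1)) × Fin (n+1)) :=
    univ.filter fun y =>
      (IsRootedTree n y.1 ∧ (Ch y.1).card = k) ∧ y.2 ≠ 0 ∧ y.1 y.2 ≠ 0 with hBdef
  have hmemA : ∀ x, x ∈ A ↔
      (IsRootedTree n x.1 ∧ (Ch x.1).card = k + 1) ∧ x.2.1 ≠ 0 ∧ x.1 x.2.1 = 0 ∧
        x.2.2 ≠ 0 ∧ ∀ m, (x.1^[m]) x.2.2 ≠ x.2.1 := by
    intro x; simp [hAdef]
  have hmemB : ∀ y, y ∈ B ↔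
      (IsRootedTree n y.1 ∧ (Ch y.1).card = k) ∧ y.2 ≠ 0 ∧ y.1 y.2 ≠ 0 := by
    intro y; simp [hBdef]
  -- the bijection
  have hAB : A.card = B.card := by
    refine Finset.card_bij' (fun x _ => (Function.update x.1 x.2.1 x.2.2, x.2.1))
      (fun y _ => (Function.update y.1 y.2 0, y.2, y.1 y.2)) ?_ ?_ ?_ ?_
    · intro x hx
      obtain ⟨⟨hroot, hdeg⟩, hc0, hpc, hv0, hav⟩ := (hmemA x).1 hx
      simp only [hmemB]
      refine ⟨⟨add_rooted hroot hc0 hpc hv0 hav, ?_⟩, hc0, ?_⟩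
      · rw [Ch_update_add hv0, Finset.card_erase_of_mem (mem_Ch.2 ⟨hc0, hpc⟩), hdeg]
        omega
      · rw [Function.update_self]; exact hv0
    · intro y hy
      obtain ⟨⟨hroot, hdeg⟩, hu0, hqu⟩ := (hmemB y).1 hy
      simp only [hmemA]
      refine ⟨⟨remove_rooted hroot hu0, ?_⟩, hu0, Function.update_self _ _ _, hqu,
        remove_avoid hroot hu0⟩
      rw [Ch_update_remove hu0, Finset.card_insert_of_notMem (fun hm => hqu (mem_Ch.1 hm).2),
        hdeg]
    · intro x hx
      obtain ⟨⟨hroot, hdeg⟩, hc0, hpc, hv0, hav⟩ := (hmemA x).1 hx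
      have h1 : Function.update x.1 x.2.1 x.2.2 x.2.1 = x.2.2 := Function.update_self _ _ _
      have h2 : Function.update (Function.update x.1 x.2.1 x.2.2) x.2.1 0 = x.1 := by
        rw [Function.update_idem, ← hpc, Function.update_eq_self]
      simp [Prod.ext_iff, h1, h2]
    · intro y hy
      obtain ⟨⟨hroot, hdeg⟩, hu0, hqu⟩ := (hmemB y).1 hy
      have h1 : Function.update y.1 y.2 0 y.2 = (0 : Fin (n+1)) := Function.update_self _ _ _
      have h2 : Function.update (Function.update y.1 y.2 0) y.2 (y.1 y.2) = y.1 := by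
        rw [Function.update_idem, Function.update_eq_self]
      simp [Prod.ext_iff, h1, h2]
  -- counting A
  have hA : A.card = (Pk n (k+1)).card * (n * k) := by
    rw [Finset.card_eq_sum_card_fiberwise (f := Prod.fst) (t := Pk n (k+1))
      (fun x hx => mem_Pk.2 ((hmemA x).1 hx).1)]
    rw [Finset.sum_congr rfl (fun p hp => ?_), Finset.sum_const, smul_eq_mul]
    obtain ⟨hroot, hdeg⟩ := mem_Pk.1 hp
    -- fiber over p has cardinality n * k
    have hfiber : (A.filter fun x => x.1 = p).card =
        (univ.filter fun cv : Fin (n+1) × Fin (n+1) =>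
          cv.1 ≠ 0 ∧ p cv.1 = 0 ∧ cv.2 ≠ 0 ∧ ∀ m, (p^[m]) cv.2 ≠ cv.1).card := by
      refine Finset.card_bij' (fun x _ => x.2) (fun cv _ => (p, cv)) ?_ ?_ ?_ ?_
      · intro x hx
        rw [Finset.mem_filter] at hx
        obtain ⟨hxA, hx1⟩ := hx
        obtain ⟨_, hc0, hpc, hv0, hav⟩ := (hmemA x).1 hxA
        subst hx1
        simp only [Finset.mem_filter, Finset.mem_univ, true_and]
        exact ⟨hc0, hpc, hv0, hav⟩
      · intro cv hcv
        simp only [Finset.mem_filter, Finset.mem_univ, true_and] at hcv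
        rw [Finset.mem_filter]
        exact ⟨(hmemA _).2 ⟨⟨hroot, hdeg⟩, hcv.1, hcv.2.1, hcv.2.2.1, hcv.2.2.2⟩, rfl⟩
      · intro x hx
        rw [Finset.mem_filter] at hx
        simp [Prod.ext_iff, hx.2]
      · intro cv _; rfl
    rw [hfiber]
    rw [Finset.card_eq_sum_card_fiberwise (f := Prod.snd)
      (t := univ.filter fun v : Fin (n+1) => v ≠ 0)
      (fun cv hcv => by
        simp only [Finset.mem_coe, Finset.mem_filter, Finset.mem_univ, true_and] at hcv ⊢
        exact hcv.2.2.1)]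
    rw [Finset.sum_congr rfl (fun v hv => ?_), Finset.sum_const, smul_eq_mul, card_N]
    simp only [Finset.mem_filter, Finset.mem_univ, true_and] at hv
    -- fiber over v has cardinality k
    have hrtmem : rt p v ∈ Ch p := mem_Ch.2 ⟨rt_ne_zero hroot hv, rt_child hroot hv⟩
    have : ((univ.filter fun cv : Fin (n+1) × Fin (n+1) =>
          cv.1 ≠ 0 ∧ p cv.1 = 0 ∧ cv.2 ≠ 0 ∧ ∀ m, (p^[m]) cv.2 ≠ cv.1).filter
          fun cv => cv.2 = v).card = ((Ch p).erase (rt p v)).card := by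
      refine Finset.card_bij' (fun cv _ => cv.1) (fun c _ => (c, v)) ?_ ?_ ?_ ?_
      · intro cv hcv
        simp only [Finset.mem_filter, Finset.mem_univ, true_and] at hcv
        obtain ⟨⟨hc0, hpc, hv0, hav⟩, hcv2⟩ := hcv
        subst hcv2
        rw [Finset.mem_erase]
        refine ⟨fun hre => ?_, mem_Ch.2 ⟨hc0, hpc⟩⟩
        obtain ⟨m, hm⟩ := (rt_eq_iff hroot hc0 hpc hv0).1 hre.symm
        exact hav m hm
      · intro c hc
        rw [Finset.mem_erase] at hc
        obtain ⟨hcr, hcC⟩ := hc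
        obtain ⟨hc0, hpc⟩ := mem_Ch.1 hcC
        rw [Finset.mem_filter]
        refine ⟨?_, rfl⟩
        rw [Finset.mem_filter]
        exact ⟨Finset.mem_univ _,
          hc0, hpc, hv, fun m hm => hcr ((rt_eq_iff hroot hc0 hpc hv).2 ⟨m, hm⟩).symm⟩
      · intro cv hcv
        simp only [Finset.mem_filter, Finset.mem_univ, true_and] at hcv
        simp [Prod.ext_iff, hcv.2]
      · intro c _; rfl
    rw [this, Finset.card_erase_of_mem hrtmem, hdeg]
    omega
  -- counting B
  have hB : B.card = (Pk n k).card * (n - k) := by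
    rw [Finset.card_eq_sum_card_fiberwise (f := Prod.fst) (t := Pk n k)
      (fun y hy => mem_Pk.2 ((hmemB y).1 hy).1)]
    rw [Finset.sum_congr rfl (fun q hq => ?_), Finset.sum_const, smul_eq_mul]
    obtain ⟨hroot, hdeg⟩ := mem_Pk.1 hq
    have hfiber : (B.filter fun y => y.1 = q).card =
        (univ.filter fun u : Fin (n+1) => u ≠ 0 ∧ q u ≠ 0).card := by
      refine Finset.card_bij' (fun y _ => y.2) (fun u _ => (q, u)) ?_ ?_ ?_ ?_
      · intro y hy
        rw [Finset.mem_filter] at hy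
        obtain ⟨hyB, hy1⟩ := hy
        obtain ⟨_, hu0, hqu⟩ := (hmemB y).1 hyB
        subst hy1
        simp only [Finset.mem_filter, Finset.mem_univ, true_and]
        exact ⟨hu0, hqu⟩
      · intro u hu
        simp only [Finset.mem_filter, Finset.mem_univ, true_and] at hu
        rw [Finset.mem_filter]
        exact ⟨(hmemB _).2 ⟨⟨hroot, hdeg⟩, hu.1, hu.2⟩, rfl⟩
      · intro y hy
        rw [Finset.mem_filter] at hy
        simp [Prod.ext_iff, hy.2]
      · intro u _; rfl
    rw [hfiber]
    have hset : (univ.filter fun u : Fin (n+1) => u ≠ 0 ∧ q u ≠ 0) =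
        (univ.filter fun v : Fin (n+1) => v ≠ 0) \ Ch q := by
      ext u
      simp only [Finset.mem_filter, Finset.mem_univ, true_and, Finset.mem_sdiff, mem_Ch]
      tauto
    rw [hset, Finset.card_sdiff_of_subset (fun c hc => by
      simp only [Finset.mem_filter, Finset.mem_univ, true_and]
      exact (mem_Ch.1 hc).1), card_N, hdeg]
  rw [← hA, ← hB, hAB]

lemma base (n : ℕ) : (Pk n n).card = 1 := by
  classical
  have hPk : Pk n n = {fun _ => 0} := by
    ext p
    rw [mem_Pk, Finset.mem_singleton]
    constructor
    · rintro ⟨hroot, hdeg⟩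
      funext v
      by_cases hv : v = 0
      · subst hv; exact zero_fix hroot
      · have hsub : Ch p ⊆ univ.filter (fun v : Fin (n+1) => v ≠ 0) := by
          intro c hc
          simp only [Finset.mem_filter, Finset.mem_univ, true_and]
          exact (mem_Ch.1 hc).1
        have heq := Finset.eq_of_subset_of_card_le hsub (by rw [card_N, hdeg])
        have hv' : v ∈ Ch p := by
          rw [heq]
          simp [hv]
        exact (mem_Ch.1 hv').2
    · rintro rfl
      refine ⟨⟨fun v => ?_, fun v => ⟨1, by simp⟩⟩, ?_⟩
      · simp [eq_comm]
      · have hCh : Ch (fun _ => (0 : Fin (n+1))) = univ.filter (fun v : Fin (n+1) => v ≠ 0) := by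
          ext w; simp [mem_Ch]
        rw [hCh, card_N]
  rw [hPk, Finset.card_singleton]

lemma main_aux (n : ℕ) : ∀ j k : ℕ, 1 ≤ k → k + j = n →
    (Pk n k).card = Nat.choose (n - 1) (k - 1) * n ^ (n - k) := by
  intro j
  induction j with
  | zero =>
      intro k hk hkn
      have : k = n := by omega
      subst this
      rw [base, Nat.sub_self, pow_zero, Nat.choose_self, mul_one]
  | succ j ih =>
      intro k hk hkn
      have hkn' : k < n := by omega
      have ihk : (Pk n (k+1)).card = Nat.choose (n - 1) k * n ^ (n - (k+1)) :=
        ih (k + 1) (by omega) (by omega)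
      have hrec := recurrence n k
      rw [ihk] at hrec
      have hchoose : Nat.choose (n-1) k * k = Nat.choose (n-1) (k-1) * (n - k) := by
        have := Nat.choose_succ_right_eq (n-1) (k-1)
        have hk1 : k - 1 + 1 = k := by omega
        rw [hk1] at this
        have hnk : n - 1 - (k - 1) = n - k := by omega
        rw [hnk] at this
        exact this
      have hpow : n ^ (n - k) = n ^ (n - (k+1)) * n := by
        have : n - k = (n - (k+1)) + 1 := by omega
        rw [this, pow_succ]
      have hkey : Nat.choose (n-1) k * n ^ (n - (k+1)) * (n * k) =
          Nat.choose (n-1) (k-1) * n ^ (n - k) * (n - k) := by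
        rw [hpow]
        calc Nat.choose (n-1) k * n ^ (n - (k+1)) * (n * k)
            = (Nat.choose (n-1) k * k) * (n ^ (n - (k+1)) * n) := by ring
          _ = (Nat.choose (n-1) (k-1) * (n - k)) * (n ^ (n - (k+1)) * n) := by rw [hchoose]
          _ = Nat.choose (n-1) (k-1) * (n ^ (n - (k+1)) * n) * (n - k) := by ring
      rw [hkey] at hrec
      exact (Nat.eq_of_mul_eq_mul_right (show 0 < n - k by omega) hrec).symm

lemma natCard_filter {α : Type*} [Fintype α] (pr : α → Prop) [DecidablePred pr] :
    Nat.card {x // pr x} = (univ.filter pr).card := by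
  rw [Nat.card_eq_fintype_card, Fintype.card_subtype]

end RootedTreeCount

theorem card_rooted_trees_root_degree (n k : ℕ) (hk : 1 ≤ k) (hk' : k ≤ n) :
    Nat.card {p : Fin (n + 1) → Fin (n + 1) // IsRootedTree n p ∧
        Nat.card {v : Fin (n + 1) // v ≠ 0 ∧ p v = 0} = k} =
      Nat.choose (n - 1) (k - 1) * n ^ (n - k) := by
  classical
  open RootedTreeCount in
  have hiff : ∀ p : Fin (n+1) → Fin (n+1),
      (IsRootedTree n p ∧ Nat.card {v : Fin (n+1) // v ≠ 0 ∧ p v = 0} = k) ↔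
      (IsRootedTree n p ∧ (RootedTreeCount.Ch p).card = k) := by
    intro p
    have hc : Nat.card {v : Fin (n+1) // v ≠ 0 ∧ p v = 0} = (RootedTreeCount.Ch p).card := by
      rw [RootedTreeCount.natCard_filter, RootedTreeCount.Ch]
    rw [hc]
  calc Nat.card {p : Fin (n + 1) → Fin (n + 1) // IsRootedTree n p ∧
        Nat.card {v : Fin (n + 1) // v ≠ 0 ∧ p v = 0} = k}
      = Nat.card {p : Fin (n + 1) → Fin (n + 1) // IsRootedTree n p ∧
          (RootedTreeCount.Ch p).card = k} := Nat.card_congr (Equiv.subtypeEquivRight hiff)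
    _ = (RootedTreeCount.Pk n k).card := by
        rw [RootedTreeCount.natCard_filter, RootedTreeCount.Pk]
    _ = Nat.choose (n - 1) (k - 1) * n ^ (n - k) :=
        RootedTreeCount.main_aux n (n - k) k hk (by omega)
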